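/- Let Γ ↷ X and Λ ↷ Y be actions of countable discrete groups on second-countable locally compact Hausdorff spaces, let h : X → Y be a homeomorphism and φ : X × Γ → Λ a continuous map, and define Θ : X × Γ → Y × Λ by Θ(x,γ) := (h(x), φ(x,γ)). Then the following are equivalent: (a) Θ is an isomorphism of the transformation groupoids X ⋊ Γ and Y ⋊ Λ, i.e. Θ is a bijection, Θ⁻¹ is continuous, h(xγ) = h(x)φ(x,γ) for all x ∈ X and γ ∈ Γ, and φ(x,γγ') = φ(x,γ)φ(xγ,γ') for all x, γ, γ'; (b) φ is a cocycle, (h,φ) preserves stabilizers, and there is a continuous map η : Y × Λ → Γ such that (h,φ,η) is a continuous orbit equivalence. -/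

import Mathlib

open Set

variable {X Y Γ Λ : Type*}

/-- The stabilizer of `x` for a right action `a : X → Γ → X`. -/
def Stab (a : X → Γ → X) (x : X) : Set Γ := {γ | a x γ = x}

/-- The essential stabilizer of `x`: elements acting as the identity on a
neighbourhood of `x`. -/
def StabEss [TopologicalSpace X] (a : X → Γ → X) (x : X) : Set Γ :=
  {γ | ∃ U : Set X, IsOpen U ∧ x ∈ U ∧ ∀ y ∈ U, a y γ = y}

/-- The action is topologically free if the points with trivial stabilizer are dense. -/
def TopFree [TopologicalSpace X] [One Γ] (a : X → Γ → X) : Prop :=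
  Dense {x : X | ∀ γ : Γ, a x γ = x → γ = 1}

/-- `φ : X × Γ → Λ` is a cocycle for the action `a`. -/
def IsCocycle [Mul Γ] [Mul Λ] (a : X → Γ → X) (φ : X × Γ → Λ) : Prop :=
  ∀ (x : X) (γ γ' : Γ), φ (x, γ * γ') = φ (x, γ) * φ (a x γ, γ')

/-- `(h, φ, η)` is a continuous orbit equivalence between the right actions
`a : X → Γ → X` and `b : Y → Λ → Y`. -/
def IsCOE [TopologicalSpace X] [TopologicalSpace Y] [TopologicalSpace Γ] [TopologicalSpace Λ]
    (a : X → Γ → X) (b : Y → Λ → Y) (h : X ≃ₜ Y) (φ : X × Γ → Λ) (η : Y × Λ → Γ) : Prop :=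
  Continuous φ ∧ Continuous η ∧
    (∀ (x : X) (γ : Γ), h (a x γ) = b (h x) (φ (x, γ))) ∧
    (∀ (y : Y) (lam : Λ), h.symm (b y lam) = a (h.symm y) (η (y, lam)))

/-- `(h, φ)` preserves stabilizers. -/
def PreservesStab [TopologicalSpace X] [TopologicalSpace Y]
    (a : X → Γ → X) (b : Y → Λ → Y) (h : X ≃ₜ Y) (φ : X × Γ → Λ) : Prop :=
  ∀ x : X, Set.BijOn (fun γ => φ (x, γ)) (Stab a x) (Stab b (h x))

/-- `(h, φ)` preserves essential stabilizers. -/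
def PreservesStabEss [TopologicalSpace X] [TopologicalSpace Y]
    (a : X → Γ → X) (b : Y → Λ → Y) (h : X ≃ₜ Y) (φ : X × Γ → Λ) : Prop :=
  ∀ x : X, Set.BijOn (fun γ => φ (x, γ)) (StabEss a x) (StabEss b (h x))

theorem stmt5 [TopologicalSpace X] [SecondCountableTopology X] [LocallyCompactSpace X] [T2Space X]
    [TopologicalSpace Y] [SecondCountableTopology Y] [LocallyCompactSpace Y] [T2Space Y]
    [Group Γ] [Countable Γ] [TopologicalSpace Γ] [DiscreteTopology Γ]
    [Group Λ] [Countable Λ] [TopologicalSpace Λ] [DiscreteTopology Λ]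
    (a : X → Γ → X) (b : Y → Λ → Y)
    (ha1 : ∀ x : X, a x 1 = x) (ha2 : ∀ (x : X) (γ γ' : Γ), a (a x γ) γ' = a x (γ * γ'))
    (hacont : Continuous fun p : X × Γ => a p.1 p.2)
    (hb1 : ∀ y : Y, b y 1 = y) (hb2 : ∀ (y : Y) (lam mu : Λ), b (b y lam) mu = b y (lam * mu))
    (hbcont : Continuous fun p : Y × Λ => b p.1 p.2)
    (h : X ≃ₜ Y) (φ : X × Γ → Λ) (hφ : Continuous φ) :
    (Function.Bijective (fun p : X × Γ => ((h p.1, φ p) : Y × Λ)) ∧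
      (∃ Ξ : Y × Λ → X × Γ, Continuous Ξ ∧
        ∀ p : X × Γ, Ξ (h p.1, φ p) = p) ∧
      (∀ (x : X) (γ : Γ), h (a x γ) = b (h x) (φ (x, γ))) ∧
      IsCocycle a φ) ↔
    (IsCocycle a φ ∧ PreservesStab a b h φ ∧
      ∃ η : Y × Λ → Γ, IsCOE a b h φ η) := by
  constructor
  · rintro ⟨hbij, ⟨Ξ, hΞc, hΞ⟩, hcoe3, hcoc⟩
    have hΞr : ∀ q : Y × Λ, ((h (Ξ q).1, φ (Ξ q)) : Y × Λ) = q := by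
      intro q
      obtain ⟨p, hp⟩ := hbij.2 q
      rw [← hp, hΞ]
    refine ⟨hcoc, ?_, ⟨fun q => (Ξ q).2, hφ, continuous_snd.comp hΞc, hcoe3, ?_⟩⟩
    · intro x
      refine ⟨?_, ?_, ?_⟩
      · intro γ hγ
        have : b (h x) (φ (x, γ)) = h x := by rw [← hcoe3, hγ]
        exact this
      · intro γ hγ γ' hγ' hEq
        have h2 : ((h x, φ (x, γ)) : Y × Λ) = (h x, φ (x, γ')) := by
          simp only at hEq; rw [hEq]
        have := hbij.1 (a₁ := (x, γ)) (a₂ := (x, γ')) h2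
        exact congrArg Prod.snd this
      · intro lam hlam
        obtain ⟨⟨x', γ⟩, hp⟩ := hbij.2 (h x, lam)
        have hx : x' = x := h.injective (congrArg Prod.fst hp)
        subst hx
        have hφγ : φ (x', γ) = lam := congrArg Prod.snd hp
        refine ⟨γ, ?_, hφγ⟩
        have : h (a x' γ) = h x' := by
          rw [hcoe3, hφγ]; exact hlam
        exact h.injective this
    · intro y lam
      have hq := hΞr (y, lam)
      set p := Ξ (y, lam) with hp
      have h1 : h p.1 = y := congrArg Prod.fst hq
      have h2 : φ p = lam := congrArg Prod.snd hq
      have h3 : p.1 = h.symm y := by rw [← h1]; exact (h.symm_apply_apply p.1).symm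
      calc h.symm (b y lam) = h.symm (b (h p.1) (φ (p.1, p.2))) := by rw [h1, ← h2]
        _ = h.symm (h (a p.1 p.2)) := by rw [hcoe3]
        _ = a p.1 p.2 := h.symm_apply_apply _
        _ = a (h.symm y) p.2 := by rw [← h3]
  · rintro ⟨hcoc, hps, η, hφc, hηc, hcoe3, hcoe4⟩
    have hone : ∀ z : X, φ (z, 1) = 1 := by
      intro z
      have := hcoc z 1 1
      rw [mul_one, ha1] at this
      exact (mul_eq_left.mp this.symm)
    have hinj : Function.Injective (fun p : X × Γ => ((h p.1, φ p) : Y × Λ)) := by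
      rintro ⟨x, γ⟩ ⟨x', γ'⟩ hEq
      simp only [Prod.mk.injEq] at hEq
      obtain ⟨he1, he2⟩ := hEq
      have hx : x = x' := h.injective he1
      subst hx
      have horb : a x γ = a x γ' := by
        apply h.injective
        rw [hcoe3, hcoe3, he2]
      have hδstab : a (a x γ) (γ⁻¹ * γ') = a x γ := by
        rw [ha2, ← mul_assoc, mul_inv_cancel, one_mul, ← horb]
      have hc := hcoc x γ (γ⁻¹ * γ')
      rw [mul_inv_cancel_left, ← he2] at hc
      have hδφ : φ (a x γ, γ⁻¹ * γ') = 1 := mul_eq_left.mp hc.symm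
      have h1stab : a (a x γ) (1 : Γ) = a x γ := ha1 _
      have heq2 : (fun g => φ (a x γ, g)) (γ⁻¹ * γ') = (fun g => φ (a x γ, g)) (1 : Γ) := by
        show φ (a x γ, γ⁻¹ * γ') = φ (a x γ, 1)
        rw [hδφ, hone]
      have hγγ' : γ⁻¹ * γ' = 1 := (hps (a x γ)).injOn hδstab h1stab heq2
      have : γ = γ' := by
        have h3 := congrArg (γ * ·) hγγ'
        simpa [← mul_assoc] using h3.symm
      rw [this]
    have hsurj : Function.Surjective (fun p : X × Γ => ((h p.1, φ p) : Y × Λ)) := by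
      rintro ⟨y, lam⟩
      set x := h.symm y with hxdef
      set γ₀ := η (y, lam) with hγ₀
      set x' := a x γ₀ with hx'
      have hhx : h x = y := h.apply_symm_apply y
      have hx'1 : h x' = b y lam := by
        rw [hx', ← hcoe4 y lam, h.apply_symm_apply]
      have hx'2 : h x' = b y (φ (x, γ₀)) := by
        rw [hx', hcoe3, hhx]
      have hμstab : b (h x') ((φ (x, γ₀))⁻¹ * lam) = h x' := by
        rw [hx'2, hb2, ← mul_assoc, mul_inv_cancel, one_mul, ← hx'1, hx'2]
      obtain ⟨δ, hδstab, hδφ⟩ := (hps x').surjOn hμstab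
      refine ⟨(x, γ₀ * δ), ?_⟩
      simp only [Prod.mk.injEq]
      refine ⟨hhx, ?_⟩
      rw [hcoc x γ₀ δ, ← hx']
      simp only at hδφ
      rw [hδφ, ← mul_assoc, mul_inv_cancel, one_mul]
    have hbij : Function.Bijective (fun p : X × Γ => ((h p.1, φ p) : Y × Λ)) := ⟨hinj, hsurj⟩
    refine ⟨hbij, ?_, hcoe3, hcoc⟩
    set e := Equiv.ofBijective _ hbij with he
    have heΘ : ∀ q : Y × Λ, ((h (e.symm q).1, φ (e.symm q)) : Y × Λ) = q := fun q =>
      e.apply_symm_apply q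
    have hfst : ∀ q : Y × Λ, (e.symm q).1 = h.symm q.1 := by
      intro q
      have := congrArg Prod.fst (heΘ q)
      simp only at this
      rw [← this, h.symm_apply_apply]
    have hkey : ∀ (q : Y × Λ) (γ : Γ), (e.symm q).2 = γ ↔ φ (h.symm q.1, γ) = q.2 := by
      intro q γ
      constructor
      · intro hg
        have h2 := congrArg Prod.snd (heΘ q)
        simp only at h2
        rw [← h2, ← hfst q, ← hg]
      · intro hg
        have : e (h.symm q.1, γ) = q := by
          show ((h (h.symm q.1), φ (h.symm q.1, γ)) : Y × Λ) = q
          rw [h.apply_symm_apply, hg]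
        have := congrArg e.symm this
        rw [e.symm_apply_apply] at this
        rw [← this]
    have hξc : Continuous (fun q : Y × Λ => (e.symm q).2) := by
      rw [continuous_discrete_rng]
      intro γ
      have : (fun q : Y × Λ => (e.symm q).2) ⁻¹' {γ} =
          (fun q : Y × Λ => ((φ (h.symm q.1, γ), q.2) : Λ × Λ)) ⁻¹' {p : Λ × Λ | p.1 = p.2} := by
        ext q
        simp only [mem_preimage, mem_singleton_iff, mem_setOf_eq]
        exact hkey q γ
      rw [this]
      refine IsOpen.preimage ?_ (isOpen_discrete _)
      exact (hφ.comp ((h.symm.continuous.comp continuous_fst).prodMk continuous_const)).prodMk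
        continuous_snd
    have hΞeq : (fun q : Y × Λ => e.symm q) =
        fun q : Y × Λ => ((h.symm q.1, (e.symm q).2) : X × Γ) := by
      funext q
      exact Prod.ext (hfst q) rfl
    refine ⟨fun q => e.symm q, ?_, ?_⟩
    · rw [hΞeq]
      exact (h.symm.continuous.comp continuous_fst).prodMk hξc
    · intro p
      exact e.symm_apply_apply p
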